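/- Let β ∈ ℂ be the root of X³ − 2X² + X − 1 with |β| < 1 and Im(β) < 0, let M be the 3×3 matrix with rows (1,1,0), (0,1,1), (1,0,0), and let φ : ℝ³ → ℂ be the ℝ-linear map φ(w) = w₀ + (β²−β)·w₁ + (β−1)·w₂. Then: (i) φ(Mw) = β·φ(w) for all w ∈ ℝ³; (ii) the restriction of φ to the hyperplane P = {w ∈ ℝ³ : w₀+w₁+w₂ = 0} is an ℝ-linear bijection onto ℂ; (iii) if v₀ ∈ ℝ³ is the eigenvector of M with positive coordinates, ‖v₀‖₁ = 1, for the real eigenvalue ρ > 1 of M, then φ(π_{v₀}(w)) = φ(w) for all w ∈ ℝ³. -/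

import Mathlib

/-- `piProj y z = z - (h(z)/h(y)) • y`, the projection of `ℝ³` onto
`P = {z | z₀+z₁+z₂ = 0}` along `y`. -/
noncomputable def piProj (y z : Fin 3 → ℝ) : Fin 3 → ℝ :=
  z - ((∑ i, z i) / (∑ i, y i)) • y

/-- The linear map `φ(w) = w₀ + (β²−β)·w₁ + (β−1)·w₂ : ℝ³ → ℂ`. -/
noncomputable def phiMap (β : ℂ) (w : Fin 3 → ℝ) : ℂ :=
  (w 0 : ℂ) + (β ^ 2 - β) * (w 1 : ℂ) + (β - 1) * (w 2 : ℂ)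

/-- For `β` the root of `X³−2X²+X−1` with `|β| < 1` and `Im β < 0`, and `M` the matrix
with rows `(1,1,0)`, `(0,1,1)`, `(1,0,0)`: (i) `φ(Mw) = β·φ(w)`; (ii) `φ` restricted to
the hyperplane `P` is a bijection onto `ℂ`; (iii) if `v₀` is the positive Perron
eigenvector of `M` with `‖v₀‖₁ = 1` for the real eigenvalue `ρ > 1`, then
`φ(π_{v₀}(w)) = φ(w)` for all `w`. -/
theorem cassaigne_complex_projection
    (β : ℂ) (hβroot : β ^ 3 - 2 * β ^ 2 + β - 1 = 0)
    (hβabs : ‖β‖ < 1) (hβim : β.im < 0)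
    (M : Matrix (Fin 3) (Fin 3) ℝ) (hM : M = !![1, 1, 0; 0, 1, 1; 1, 0, 0]) :
    (∀ w : Fin 3 → ℝ, phiMap β (M.mulVec w) = β * phiMap β w) ∧
    (∀ c : ℂ, ∃! z : Fin 3 → ℝ, (∑ i, z i) = 0 ∧ phiMap β z = c) ∧
    (∀ ρ : ℝ, 1 < ρ → ∀ v₀ : Fin 3 → ℝ, (∀ i, 0 < v₀ i) → (∑ i, v₀ i) = 1 →
      M.mulVec v₀ = ρ • v₀ → ∀ w : Fin 3 → ℝ, phiMap β (piProj v₀ w) = phiMap β w) := by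
  have part1 : ∀ w : Fin 3 → ℝ, phiMap β (M.mulVec w) = β * phiMap β w := by
    intro w
    subst hM
    simp only [phiMap, Matrix.mulVec, dotProduct, Fin.sum_univ_three]
    simp [Matrix.cons_val_zero, Matrix.cons_val_one]
    push_cast
    linear_combination (-(w 1 : ℂ)) * hβroot
  refine ⟨part1, ?_, ?_⟩
  · -- part (ii)
    set a : ℂ := β ^ 2 - β - 1 with ha
    set b : ℂ := β - 2 with hb
    set D : ℝ := a.re * b.im - a.im * b.re with hD
    -- D ≠ 0
    have hb2 : (1 : ℝ) < ‖b‖ := by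
      have h1 : ‖(2 : ℂ)‖ - ‖β‖ ≤ ‖(2 : ℂ) - β‖ := norm_sub_norm_le _ _
      have h2 : ‖(2 : ℂ)‖ = 2 := by norm_num
      have h3 : ‖b‖ = ‖(2:ℂ) - β‖ := by
        rw [hb, ← norm_sub_rev]
      rw [h3]
      rw [h2] at h1
      have : ‖β‖ = ‖β‖ := rfl
      linarith [hβabs, h1, this ▸ hβabs]
    have hbsq : (1 : ℝ) < b.re ^ 2 + b.im ^ 2 := by
      have : ‖b‖ ^ 2 = b.re ^ 2 + b.im ^ 2 := by
        rw [Complex.sq_norm, Complex.normSq_apply]; ring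
      nlinarith [norm_nonneg b]
    have hDval : D = -β.im * (b.re ^ 2 + b.im ^ 2 - 1) := by
      rw [hD, ha, hb]
      simp [Complex.sub_re, Complex.sub_im, Complex.mul_re, Complex.mul_im, pow_two]
      ring
    have hDne : D ≠ 0 := by
      rw [hDval]
      have h1 : (0:ℝ) < -β.im := by linarith
      have h2 : (0:ℝ) < b.re ^ 2 + b.im ^ 2 - 1 := by linarith
      positivity
    intro c
    set s : ℝ := -(b.re * c.im - b.im * c.re) / D with hs
    set t : ℝ := (a.re * c.im - a.im * c.re) / D with ht
    refine ⟨![-s - t, s, t], ⟨?_, ?_⟩, ?_⟩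
    · simp [Fin.sum_univ_three]; ring
    · simp only [phiMap]
      show ((-s - t : ℝ) : ℂ) + (β ^ 2 - β) * (s : ℂ) + (β - 1) * (t : ℂ) = c
      have key : a * (s : ℂ) + b * (t : ℂ) = c := by
        rw [Complex.ext_iff]
        constructor
        · simp [Complex.add_re, Complex.mul_re, Complex.ofReal_re, Complex.ofReal_im,
            hs, ht]
          field_simp
          ring
        · simp [Complex.add_im, Complex.mul_im, Complex.ofReal_re, Complex.ofReal_im,
            hs, ht]
          field_simp
          ring
      rw [ha, hb] at key
      push_cast
      push_cast at key
      linear_combination key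
    · rintro z ⟨hz0, hzφ⟩
      have hz0' : z 0 = -z 1 - z 2 := by
        simp [Fin.sum_univ_three] at hz0; linarith
      have key : a * ((z 1 : ℝ) : ℂ) + b * ((z 2 : ℝ) : ℂ) = c := by
        rw [ha, hb]
        simp only [phiMap] at hzφ
        rw [hz0'] at hzφ
        push_cast at hzφ ⊢
        linear_combination hzφ
      have hre : a.re * z 1 + b.re * z 2 = c.re := by
        have := congrArg Complex.re key
        simpa [Complex.add_re, Complex.mul_re] using this
      have him : a.im * z 1 + b.im * z 2 = c.im := by
        have := congrArg Complex.im key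
        simpa [Complex.add_im, Complex.mul_im] using this
      have hz2 : z 2 = t := by
        rw [ht]
        field_simp
        linear_combination a.re * him - a.im * hre
      have hz1 : z 1 = s := by
        rw [hs]
        field_simp
        linear_combination b.im * hre - b.re * him
      funext i
      fin_cases i
      · simp [hz0', hz1, hz2]
      · simpa using hz1
      · simpa using hz2
  · -- part (iii)
    intro ρ hρ v₀ hpos hsum heig w
    have hφv : phiMap β v₀ = 0 := by
      have h1 : phiMap β (M.mulVec v₀) = β * phiMap β v₀ := part1 v₀
      have h2 : phiMap β (ρ • v₀) = (ρ : ℂ) * phiMap β v₀ := by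
        simp only [phiMap, Pi.smul_apply, smul_eq_mul]
        push_cast
        ring
      rw [heig, h2] at h1
      have hβρ : β ≠ (ρ : ℂ) := by
        intro h
        have : β.im = 0 := by rw [h]; simp
        linarith
      have h3 : (β - (ρ : ℂ)) * phiMap β v₀ = 0 := by linear_combination -h1
      rcases mul_eq_zero.mp h3 with h | h
      · exact absurd (sub_eq_zero.mp h) hβρ
      · exact h
    simp only [piProj, phiMap, Pi.sub_apply, Pi.smul_apply, smul_eq_mul,
      Fin.sum_univ_three] at hφv ⊢
    rw [show v₀ 0 + v₀ 1 + v₀ 2 = 1 from by simpa [Fin.sum_univ_three] using hsum]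
    push_cast
    linear_combination (-(((w 0 : ℝ) : ℂ) + ((w 1 : ℝ) : ℂ) + ((w 2 : ℝ) : ℂ))) * hφv
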